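/- For every n ≥ 2, the disjunctive total domination number of the path P_n equals ⌈2(n+1)/5⌉ + 1 if n ≡ 1 (mod 5), and equals ⌈2(n+1)/5⌉ otherwise. -/

import Mathlib

open SimpleGraph

def IsDTDSet {V : Type*} (G : SimpleGraph V) (S : Finset V) : Prop :=
  ∀ v : V, (∃ u ∈ S, G.Adj v u) ∨
    ∃ u ∈ S, ∃ w ∈ S, u ≠ w ∧ G.dist v u = 2 ∧ G.dist v w = 2

noncomputable def dtdNum {V : Type*} (G : SimpleGraph V) : ℕ :=
  sInf {k | ∃ S : Finset V, IsDTDSet G S ∧ S.card = k}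

def pathG (n : ℕ) : SimpleGraph (Fin n) :=
  SimpleGraph.fromRel (fun a b => (a : ℕ) + 1 = (b : ℕ))

/-! ### Basic facts about the path graph -/

lemma pathG_adj {n : ℕ} (u v : Fin n) :
    (pathG n).Adj u v ↔ ((u:ℕ) + 1 = v ∨ (v:ℕ) + 1 = u) := by
  simp only [pathG, SimpleGraph.fromRel_adj]
  refine ⟨fun h => h.2, fun h => ⟨?_, h⟩⟩
  rintro rfl; omega

lemma pathG_reach_step {n : ℕ} : ∀ (k : ℕ) (u v : Fin n), (v:ℕ) = (u:ℕ) + k →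
    (pathG n).Reachable u v := by
  intro k
  induction k with
  | zero => intro u v h; have : u = v := Fin.ext (by omega); exact this ▸ Reachable.refl u
  | succ k ih =>
    intro u v h
    have hu1 : (u:ℕ) + 1 < n := by have := v.isLt; omega
    have hadj : (pathG n).Adj u ⟨(u:ℕ)+1, hu1⟩ := (pathG_adj _ _).2 (Or.inl rfl)
    exact hadj.reachable.trans (ih ⟨(u:ℕ)+1, hu1⟩ v (by simp; omega))

lemma pathG_reachable {n : ℕ} (u v : Fin n) : (pathG n).Reachable u v := by
  rcases le_total (u:ℕ) (v:ℕ) with h | h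
  · exact pathG_reach_step ((v:ℕ) - (u:ℕ)) u v (by omega)
  · exact (pathG_reach_step ((u:ℕ) - (v:ℕ)) v u (by omega)).symm

lemma pathG_connected {n : ℕ} (hn : 0 < n) : (pathG n).Connected := by
  have : Nonempty (Fin n) := ⟨⟨0, hn⟩⟩
  exact ⟨fun u v => pathG_reachable u v⟩

lemma pathG_dist_le {n : ℕ} : ∀ (k : ℕ) (u v : Fin n), (v:ℕ) = (u:ℕ) + k →
    (pathG n).dist u v ≤ k := by
  intro k
  induction k with
  | zero => intro u v h; have : u = v := Fin.ext (by omega); simp [this]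
  | succ k ih =>
    intro u v h
    have hu1 : (u:ℕ) + 1 < n := by have := v.isLt; omega
    set u' : Fin n := ⟨(u:ℕ)+1, hu1⟩ with hu'
    have hadj : (pathG n).Adj u u' := (pathG_adj _ _).2 (Or.inl rfl)
    have h1 : (pathG n).dist u u' = 1 := SimpleGraph.dist_eq_one_iff_adj.2 hadj
    have htri := (pathG_connected (by omega : 0 < n)).dist_triangle (u := u) (v := u') (w := v)
    have h2 : (pathG n).dist u' v ≤ k := ih u' v (by simp [hu']; omega)
    omega

lemma pathG_walk_lower {n : ℕ} {u v : Fin n} (w : (pathG n).Walk u v) :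
    Nat.dist (u:ℕ) (v:ℕ) ≤ w.length := by
  induction w with
  | nil => simp [Nat.dist_self]
  | cons h p ih =>
    rename_i a b c
    have hd : Nat.dist (a:ℕ) (b:ℕ) ≤ 1 := by
      rcases (pathG_adj _ _).1 h with h' | h' <;> simp [Nat.dist] <;> omega
    calc Nat.dist (a:ℕ) (c:ℕ) ≤ Nat.dist (a:ℕ) (b:ℕ) + Nat.dist (b:ℕ) (c:ℕ) :=
          Nat.dist.triangle_inequality _ _ _
      _ ≤ 1 + p.length := by omega
      _ = (SimpleGraph.Walk.cons h p).length := by simp [SimpleGraph.Walk.length_cons]; omega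

lemma pathG_dist {n : ℕ} (u v : Fin n) : (pathG n).dist u v = Nat.dist (u:ℕ) (v:ℕ) := by
  refine le_antisymm ?_ ?_
  · rcases le_total (u:ℕ) (v:ℕ) with h | h
    · have := pathG_dist_le ((v:ℕ) - (u:ℕ)) u v (by omega)
      have hd : Nat.dist (u:ℕ) (v:ℕ) = (v:ℕ) - (u:ℕ) := by simp [Nat.dist]; omega
      omega
    · have := pathG_dist_le ((u:ℕ) - (v:ℕ)) v u (by omega)
      rw [SimpleGraph.dist_comm]
      have hd : Nat.dist (u:ℕ) (v:ℕ) = (u:ℕ) - (v:ℕ) := by simp [Nat.dist]; omega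
      omega
  · obtain ⟨w, hw⟩ := (pathG_reachable u v).exists_walk_length_eq_dist
    have := pathG_walk_lower w
    omega

/-! ### Arithmetic characterization of the DTD condition -/

/-- arithmetic membership -/
def MS {n : ℕ} (S : Finset (Fin n)) (b : ℕ) : Prop := ∃ u ∈ S, (u:ℕ) = b

def CoverCond (n : ℕ) (S : Finset (Fin n)) : Prop :=
  ∀ a, a < n →
    (a + 1 < n ∧ MS S (a+1)) ∨ (1 ≤ a ∧ MS S (a-1)) ∨
      (2 ≤ a ∧ a + 2 < n ∧ MS S (a-2) ∧ MS S (a+2))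

lemma cover {n : ℕ} {S : Finset (Fin n)} (hS : IsDTDSet (pathG n) S) :
    CoverCond n S := by
  intro a ha
  rcases hS ⟨a, ha⟩ with ⟨u, hu, hadj⟩ | ⟨u, hu, w, hw, hne, hdu, hdw⟩
  · rcases (pathG_adj _ _).1 hadj with h | h
    · have h' : a + 1 = (u:ℕ) := by simpa using h
      left; exact ⟨by have := u.isLt; omega, u, hu, by omega⟩
    · have h' : (u:ℕ) + 1 = a := by simpa using h
      right; left; exact ⟨by omega, u, hu, by omega⟩
  · rw [pathG_dist] at hdu hdw
    simp only [Nat.dist, Fin.val_mk] at hdu hdw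
    have hne' : (u:ℕ) ≠ (w:ℕ) := fun h => hne (Fin.ext h)
    have hcase : ((u:ℕ) = a + 2 ∧ (w:ℕ) + 2 = a) ∨ ((w:ℕ) = a + 2 ∧ (u:ℕ) + 2 = a) := by
      omega
    right; right
    rcases hcase with ⟨h1, h2⟩ | ⟨h1, h2⟩
    · exact ⟨by omega, by have := u.isLt; omega, ⟨w, hw, by omega⟩, ⟨u, hu, by omega⟩⟩
    · exact ⟨by omega, by have := w.isLt; omega, ⟨u, hu, by omega⟩, ⟨w, hw, by omega⟩⟩

lemma isDTD_of {n : ℕ} {S : Finset (Fin n)} (h : CoverCond n S) :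
    IsDTDSet (pathG n) S := by
  intro v
  rcases h v v.isLt with ⟨hlt, u, hu, hval⟩ | ⟨hge, u, hu, hval⟩ | ⟨h2, hlt, ⟨u, hu, hvu⟩, ⟨w, hw, hvw⟩⟩
  · exact Or.inl ⟨u, hu, (pathG_adj _ _).2 (Or.inl (by omega))⟩
  · exact Or.inl ⟨u, hu, (pathG_adj _ _).2 (Or.inr (by omega))⟩
  · refine Or.inr ⟨u, hu, w, hw, fun hh => by subst hh; omega, ?_, ?_⟩ <;>
      rw [pathG_dist] <;> simp only [Nat.dist, Fin.val_mk] <;> omega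

/-! ### Interval counting -/

/-- interval filter -/
def Iv {n : ℕ} (S : Finset (Fin n)) (a b : ℕ) : Finset (Fin n) :=
  S.filter (fun v => a ≤ (v:ℕ) ∧ (v:ℕ) < b)

lemma two_in_Iv {n : ℕ} {S : Finset (Fin n)} {a b x y : ℕ} (hx : MS S x) (hy : MS S y)
    (hxy : x ≠ y) (hax : a ≤ x) (hxb : x < b) (hay : a ≤ y) (hyb : y < b) :
    2 ≤ (Iv S a b).card := by
  obtain ⟨u, hu, hux⟩ := hx
  obtain ⟨w, hw, hwy⟩ := hy
  have h1 : u ∈ Iv S a b := by simp [Iv, Finset.mem_filter]; exact ⟨hu, by omega, by omega⟩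
  have h2 : w ∈ Iv S a b := by simp [Iv, Finset.mem_filter]; exact ⟨hw, by omega, by omega⟩
  exact Finset.one_lt_card.2 ⟨u, h1, w, h2, fun h => hxy (by rw [h] at hux; omega)⟩

lemma one_in_Iv {n : ℕ} {S : Finset (Fin n)} {a b x : ℕ} (hx : MS S x)
    (hax : a ≤ x) (hxb : x < b) : 1 ≤ (Iv S a b).card := by
  obtain ⟨u, hu, hux⟩ := hx
  exact Finset.card_pos.2 ⟨u, by simp [Iv, Finset.mem_filter]; exact ⟨hu, by omega, by omega⟩⟩

lemma Iv_split {n : ℕ} (S : Finset (Fin n)) {a b c : ℕ} (hab : a ≤ b) (hbc : b ≤ c) :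
    (Iv S a b).card + (Iv S b c).card ≤ (Iv S a c).card := by
  have hdisj : Disjoint (Iv S a b) (Iv S b c) := by
    rw [Finset.disjoint_left]
    intro v hv hv'
    simp [Iv, Finset.mem_filter] at hv hv'
    omega
  rw [← Finset.card_union_of_disjoint hdisj]
  apply Finset.card_le_card
  intro v hv
  simp [Iv, Finset.mem_filter, Finset.mem_union] at hv ⊢
  rcases hv with ⟨h, h2, h3⟩ | ⟨h, h2, h3⟩ <;> exact ⟨h, by omega, by omega⟩

lemma Iv_card_le {n : ℕ} (S : Finset (Fin n)) (a b : ℕ) : (Iv S a b).card ≤ S.card :=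
  Finset.card_le_card (Finset.filter_subset _ _)

lemma two_in_S {n : ℕ} {S : Finset (Fin n)} {x y : ℕ} (hx : MS S x) (hy : MS S y)
    (hxy : x ≠ y) : 2 ≤ S.card := by
  obtain ⟨u, hu, hux⟩ := hx
  obtain ⟨w, hw, hwy⟩ := hy
  exact Finset.one_lt_card.2 ⟨u, hu, w, hw, fun h => hxy (by rw [h] at hux; omega)⟩

/-! ### Lower bound -/

section LowerBound
variable {n : ℕ} {S : Finset (Fin n)} (hcov : CoverCond n S)

include hcov in
lemma window {a : ℕ} (h5 : a + 5 ≤ n) : 2 ≤ (Iv S a (a+5)).card := by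
  rcases hcov (a+2) (by omega) with ⟨-, h1⟩ | ⟨-, h1⟩ | ⟨-, -, h1, h2⟩
  · rcases hcov (a+3) (by omega) with ⟨-, h2⟩ | ⟨-, h2⟩ | ⟨-, -, h2, -⟩
    · exact two_in_Iv h1 h2 (by omega) (by omega) (by omega) (by omega) (by omega)
    · exact two_in_Iv h1 (show MS S (a+2) by simpa using h2) (by omega) (by omega) (by omega) (by omega) (by omega)
    · exact two_in_Iv h1 (show MS S (a+1) by simpa using h2) (by omega) (by omega) (by omega) (by omega) (by omega)
  · have h1 : MS S (a+1) := by simpa using h1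
    rcases hcov (a+1) (by omega) with ⟨-, h2⟩ | ⟨h0, h2⟩ | ⟨-, -, h2, h3⟩
    · exact two_in_Iv h1 h2 (by omega) (by omega) (by omega) (by omega) (by omega)
    · exact two_in_Iv h1 (show MS S a by simpa using h2) (by omega) (by omega) (by omega) (by omega) (by omega)
    · exact two_in_Iv h1 h3 (by omega) (by omega) (by omega) (by omega) (by omega)
  · exact two_in_Iv (show MS S a by simpa using h1) h2 (by omega) (by omega) (by omega) (by omega) (by omega)

include hcov in
lemma windows : ∀ (k a : ℕ), a + 5*k ≤ n → 2*k ≤ (Iv S a (a + 5*k)).card := by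
  intro k
  induction k with
  | zero => intro a h; simp
  | succ k ih =>
    intro a h
    have h1 := window hcov (a := a) (by omega)
    have h2 := ih (a+5) (by omega)
    have h3 := Iv_split S (a := a) (b := a+5) (c := a + 5*(k+1)) (by omega) (by omega)
    have : a + 5 + 5*k = a + 5*(k+1) := by omega
    rw [this] at h2
    omega

include hcov in
lemma end_left1 (h : 0 < n) : MS S 1 := by
  rcases hcov 0 h with ⟨-, h1⟩ | ⟨h1, -⟩ | ⟨h1, -⟩ <;> first | exact h1 | omega

include hcov in
lemma end_left2 (h : 2 ≤ n) : MS S 0 ∨ MS S 2 := by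
  rcases hcov 1 (by omega) with ⟨-, h1⟩ | ⟨-, h1⟩ | ⟨h1, -⟩
  · exact Or.inr h1
  · exact Or.inl (by simpa using h1)
  · omega

include hcov in
lemma end_right1 (h : 2 ≤ n) : MS S (n-2) := by
  rcases hcov (n-1) (by omega) with ⟨h1, -⟩ | ⟨-, h1⟩ | ⟨-, h1, -⟩
  · omega
  · simpa [Nat.sub_sub] using h1
  · omega

include hcov in
lemma end_right2 (h : 3 ≤ n) : MS S (n-1) ∨ MS S (n-3) := by
  rcases hcov (n-2) (by omega) with ⟨-, h1⟩ | ⟨-, h1⟩ | ⟨-, h1, -⟩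
  · left; have : n - 2 + 1 = n - 1 := by omega
    rwa [this] at h1
  · right; have : n - 2 - 1 = n - 3 := by omega
    rwa [this] at h1
  · omega

include hcov in
lemma lower_bound (hn : 2 ≤ n) :
    (if n % 5 = 1 then (2 * (n + 1) + 4) / 5 + 1 else (2 * (n + 1) + 4) / 5) ≤ S.card := by
  have h1 : MS S 1 := end_left1 hcov (by omega)
  by_cases h5 : n < 5
  · have h2 : 2 ≤ S.card := by
      rcases Nat.lt_or_ge n 3 with h3 | h3
      · exact two_in_S h1 (by have := end_right1 hcov hn; simpa [show n - 2 = 0 by omega] using this)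
          (by omega)
      · rcases end_left2 hcov hn with h2 | h2
        · exact two_in_S h1 h2 (by omega)
        · exact two_in_S h1 h2 (by omega)
    split <;> omega
  · push_neg at h5
    set m := n / 5 with hm
    have hm1 : 1 ≤ m := by omega
    have hA : 2 ≤ (Iv S 0 3).card := by
      rcases end_left2 hcov hn with h2 | h2
      · exact two_in_Iv h1 h2 (by omega) (by omega) (by omega) (by omega) (by omega)
      · exact two_in_Iv h1 h2 (by omega) (by omega) (by omega) (by omega) (by omega)
    have hB : 2 * (m-1) ≤ (Iv S 3 (3 + 5*(m-1))).card := windows hcov (m-1) 3 (by omega)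
    have hC : (if n % 5 = 0 then 1 else 2) ≤ (Iv S (3 + 5*(m-1)) n).card := by
      have hr1 : MS S (n-2) := end_right1 hcov hn
      by_cases hr : n % 5 = 0
      · simp only [hr, if_pos]
        exact one_in_Iv hr1 (by omega) (by omega)
      · simp only [hr, if_neg, if_false]
        rcases end_right2 hcov (by omega) with h2 | h2
        · exact two_in_Iv hr1 h2 (by omega) (by omega) (by omega) (by omega) (by omega)
        · exact two_in_Iv hr1 h2 (by omega) (by omega) (by omega) (by omega) (by omega)
    have hs1 := Iv_split S (a := 0) (b := 3) (c := 3 + 5*(m-1)) (by omega) (by omega)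
    have hs2 := Iv_split S (a := 0) (b := 3 + 5*(m-1)) (c := n) (by omega) (by omega)
    have hs3 := Iv_card_le S 0 n
    by_cases hr : n % 5 = 0
    · simp only [hr, if_pos] at hC
      have : n % 5 ≠ 1 := by omega
      split <;> omega
    · simp only [hr, if_neg, if_false] at hC
      split <;> omega

end LowerBound

/-! ### Upper bound : construction -/

/-- pattern function -/
def patF (t e : ℕ) (j : ℕ) : ℕ := if j < t then 5*(j/2) + 1 + j%2 else e + (j - t)

lemma exists_S (n t e c : ℕ)
    (h1 : ∀ j, j < t → 5*(j/2) + 1 + j%2 < e)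
    (h2 : e + c ≤ n) :
    ∃ S : Finset (Fin n), S.card = t + c ∧
      (∀ b, b < 5*(t/2) → (b % 5 = 1 ∨ b % 5 = 2) → MS S b) ∧
      (∀ i, i < c → MS S (e + i)) := by
  have hb : ∀ j : Fin (t + c), patF t e j < n := by
    intro j
    have := j.isLt
    unfold patF
    split
    · have := h1 j (by assumption); omega
    · omega
  set f : Fin (t + c) → Fin n := fun j => ⟨patF t e j, hb j⟩ with hf
  have hinj : Function.Injective f := by
    intro j k hjk
    have hjk' : patF t e j = patF t e k := congrArg Fin.val hjk
    have hj := j.isLt; have hk := k.isLt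
    unfold patF at hjk'
    apply Fin.ext
    split at hjk' <;> split at hjk'
    · omega
    · have := h1 j (by assumption); omega
    · have := h1 k (by assumption); omega
    · omega
  refine ⟨Finset.univ.image f, ?_, ?_, ?_⟩
  · rw [Finset.card_image_of_injective _ hinj, Finset.card_univ, Fintype.card_fin]
  · intro b hb5 hbmod
    have hjt : 2*(b/5) + (b % 5 - 1) < t := by omega
    refine ⟨f ⟨2*(b/5) + (b % 5 - 1), by omega⟩, Finset.mem_image_of_mem _ (Finset.mem_univ _), ?_⟩
    show patF t e (2*(b/5) + (b % 5 - 1)) = b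
    unfold patF
    rw [if_pos hjt]
    omega
  · intro i hi
    refine ⟨f ⟨t + i, by omega⟩, Finset.mem_image_of_mem _ (Finset.mem_univ _), ?_⟩
    show patF t e (t + i) = e + i
    unfold patF
    rw [if_neg (by omega)]
    omega

section CoverProofs
variable {n m : ℕ} {S : Finset (Fin n)}

lemma cover_r0 (hm : 1 ≤ m) (hn : n = 5*m)
    (hp : ∀ b, b < 5*(m-1) → (b % 5 = 1 ∨ b % 5 = 2) → MS S b)
    (hx0 : MS S (n-4)) (hx1 : MS S (n-3)) (hx2 : MS S (n-2)) :
    CoverCond n S := by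
  intro a ha
  by_cases c1 : a % 5 = 0 ∨ a % 5 = 1
  · refine Or.inl ⟨by omega, ?_⟩
    by_cases c2 : a + 1 < 5*(m-1)
    · exact hp (a+1) c2 (by omega)
    · rcases c1 with c1 | c1
      · have h : a + 1 = n - 4 := by omega
        rw [h]; exact hx0
      · have h : a + 1 = n - 3 := by omega
        rw [h]; exact hx1
  · by_cases c2 : a % 5 = 2 ∨ a % 5 = 3
    · refine Or.inr (Or.inl ⟨by omega, ?_⟩)
      by_cases c3 : a - 1 < 5*(m-1)
      · exact hp (a-1) c3 (by omega)
      · rcases c2 with c2 | c2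
        · have h : a - 1 = n - 4 := by omega
          rw [h]; exact hx0
        · have h : a - 1 = n - 3 := by omega
          rw [h]; exact hx1
    · have c4 : a % 5 = 4 := by omega
      by_cases c5 : a + 1 = n
      · refine Or.inr (Or.inl ⟨by omega, ?_⟩)
        have h : a - 1 = n - 2 := by omega
        rw [h]; exact hx2
      · refine Or.inr (Or.inr ⟨by omega, by omega, ?_, ?_⟩)
        · exact hp (a-2) (by omega) (by omega)
        · by_cases c6 : a + 2 < 5*(m-1)
          · exact hp (a+2) c6 (by omega)
          · have h : a + 2 = n - 4 := by omega
            rw [h]; exact hx0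

lemma cover_r123 (hr : n % 5 = 1 ∨ n % 5 = 2 ∨ n % 5 = 3) (hm : m = n / 5) (hn : 2 ≤ n)
    (hp : ∀ b, b < 5*m → (b % 5 = 1 ∨ b % 5 = 2) → MS S b)
    (hx0 : MS S (n-2)) (hx1 : MS S (n-1)) :
    CoverCond n S := by
  intro a ha
  by_cases c1 : a % 5 = 0 ∨ a % 5 = 1
  · by_cases c2 : a + 1 < 5*m
    · exact Or.inl ⟨by omega, hp (a+1) c2 (by omega)⟩
    · by_cases c3 : a + 1 = n
      · refine Or.inr (Or.inl ⟨by omega, ?_⟩)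
        have h : a - 1 = n - 2 := by omega
        rw [h]; exact hx0
      · by_cases c4 : a + 2 = n
        · refine Or.inl ⟨by omega, ?_⟩
          have h : a + 1 = n - 1 := by omega
          rw [h]; exact hx1
        · refine Or.inl ⟨by omega, ?_⟩
          have h : a + 1 = n - 2 := by omega
          rw [h]; exact hx0
  · by_cases c2 : a % 5 = 2 ∨ a % 5 = 3
    · refine Or.inr (Or.inl ⟨by omega, ?_⟩)
      by_cases c3 : a - 1 < 5*m
      · exact hp (a-1) c3 (by omega)
      · have h : a - 1 = n - 2 := by omega
        rw [h]; exact hx0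
    · have c4 : a % 5 = 4 := by omega
      by_cases c5 : a + 6 ≤ 5*m
      · exact Or.inr (Or.inr ⟨by omega, by omega, hp (a-2) (by omega) (by omega),
          hp (a+2) (by omega) (by omega)⟩)
      · by_cases c6 : a + 2 = n
        · refine Or.inl ⟨by omega, ?_⟩
          have h : a + 1 = n - 1 := by omega
          rw [h]; exact hx1
        · by_cases c7 : a + 3 = n
          · refine Or.inl ⟨by omega, ?_⟩
            have h : a + 1 = n - 2 := by omega
            rw [h]; exact hx0
          · refine Or.inr (Or.inr ⟨by omega, by omega, hp (a-2) (by omega) (by omega), ?_⟩)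
            have h : a + 2 = n - 2 := by omega
            rw [h]; exact hx0

lemma cover_r4 (hr : n % 5 = 4) (hm : m = n / 5)
    (hp : ∀ b, b < 5*m → (b % 5 = 1 ∨ b % 5 = 2) → MS S b)
    (hx0 : MS S (n-3)) (hx1 : MS S (n-2)) :
    CoverCond n S := by
  intro a ha
  by_cases c1 : a % 5 = 0 ∨ a % 5 = 1
  · refine Or.inl ⟨by omega, ?_⟩
    by_cases c2 : a + 1 < 5*m
    · exact hp (a+1) c2 (by omega)
    · rcases c1 with c1 | c1
      · have h : a + 1 = n - 3 := by omega
        rw [h]; exact hx0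
      · have h : a + 1 = n - 2 := by omega
        rw [h]; exact hx1
  · by_cases c2 : a % 5 = 2 ∨ a % 5 = 3
    · refine Or.inr (Or.inl ⟨by omega, ?_⟩)
      by_cases c3 : a - 1 < 5*m
      · exact hp (a-1) c3 (by omega)
      · rcases c2 with c2 | c2
        · have h : a - 1 = n - 3 := by omega
          rw [h]; exact hx0
        · have h : a - 1 = n - 2 := by omega
          rw [h]; exact hx1
    · have c4 : a % 5 = 4 := by omega
      refine Or.inr (Or.inr ⟨by omega, by omega, hp (a-2) (by omega) (by omega), ?_⟩)
      by_cases c5 : a + 2 < 5*m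
      · exact hp (a+2) c5 (by omega)
      · have h : a + 2 = n - 3 := by omega
        rw [h]; exact hx0

end CoverProofs

lemma upper_bound (n : ℕ) (hn : 2 ≤ n) :
    ∃ S : Finset (Fin n), IsDTDSet (pathG n) S ∧
      S.card = (if n % 5 = 1 then (2 * (n + 1) + 4) / 5 + 1 else (2 * (n + 1) + 4) / 5) := by
  set m := n / 5 with hm
  by_cases hr0 : n % 5 = 0
  · -- t = 2(m-1), e = n-4, c = 3
    obtain ⟨S, hcard, hp, he⟩ := exists_S n (2*(m-1)) (n-4) 3
      (fun j hj => by omega) (by omega)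
    have hx0 : MS S (n-4) := by simpa using he 0 (by omega)
    have hx1 : MS S (n-3) := by have := he 1 (by omega); rwa [show n-4+1 = n-3 by omega] at this
    have hx2 : MS S (n-2) := by have := he 2 (by omega); rwa [show n-4+2 = n-2 by omega] at this
    have hp' : ∀ b, b < 5*(m-1) → (b % 5 = 1 ∨ b % 5 = 2) → MS S b := by
      intro b hb hbm; exact hp b (by omega) hbm
    refine ⟨S, isDTD_of (cover_r0 (by omega) (by omega) hp' hx0 hx1 hx2), ?_⟩
    rw [hcard]
    have : n % 5 ≠ 1 := by omega
    split <;> omega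
  · by_cases hr4 : n % 5 = 4
    · -- t = 2m, e = n-3, c = 2
      obtain ⟨S, hcard, hp, he⟩ := exists_S n (2*m) (n-3) 2
        (fun j hj => by omega) (by omega)
      have hx0 : MS S (n-3) := by simpa using he 0 (by omega)
      have hx1 : MS S (n-2) := by have := he 1 (by omega); rwa [show n-3+1 = n-2 by omega] at this
      have hp' : ∀ b, b < 5*m → (b % 5 = 1 ∨ b % 5 = 2) → MS S b := by
        intro b hb hbm; exact hp b (by omega) hbm
      refine ⟨S, isDTD_of (cover_r4 hr4 hm hp' hx0 hx1), ?_⟩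
      rw [hcard]
      have : n % 5 ≠ 1 := by omega
      split <;> omega
    · -- r ∈ {1,2,3} : t = 2m, e = n-2, c = 2
      obtain ⟨S, hcard, hp, he⟩ := exists_S n (2*m) (n-2) 2
        (fun j hj => by omega) (by omega)
      have hx0 : MS S (n-2) := by simpa using he 0 (by omega)
      have hx1 : MS S (n-1) := by have := he 1 (by omega); rwa [show n-2+1 = n-1 by omega] at this
      have hp' : ∀ b, b < 5*m → (b % 5 = 1 ∨ b % 5 = 2) → MS S b := by
        intro b hb hbm; exact hp b (by omega) hbm
      refine ⟨S, isDTD_of (cover_r123 (by omega) hm hn hp' hx0 hx1), ?_⟩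
      rw [hcard]
      split <;> omega

/-- The disjunctive total domination number of the path P_n. -/
theorem dtd_path (n : ℕ) (hn : 2 ≤ n) :
    dtdNum (pathG n) =
      if n % 5 = 1 then (2 * (n + 1) + 4) / 5 + 1 else (2 * (n + 1) + 4) / 5 := by
  obtain ⟨S, hS, hcard⟩ := upper_bound n hn
  refine le_antisymm (Nat.sInf_le ⟨S, hS, hcard⟩)
    (le_csInf ⟨S.card, S, hS, rfl⟩ ?_)
  rintro k ⟨S', hS', rfl⟩
  exact lower_bound (cover hS') hn
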